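/- In an LMC with no stutter steps, i.e., P(s)(L(s)) = 0 for all s ∈ S, a reflexive symmetric relation R relating only equally labeled states is a weak ε-bisimulation if and only if it is an ε-bisimulation; consequently ∼_ε = ≈^w_ε. -/

import Mathlib

open scoped BigOperators

attribute [local instance] Classical.propDecidable

/-- Mass that a (sub)distribution `μ` assigns to a set `A`. -/
noncomputable def pmass {S : Type*} (μ : S → ℝ) (A : Set S) : ℝ := ∑' a : A, μ a

/-- L1-distance between two functions `S → ℝ`. -/
noncomputable def l1dist {S : Type*} (μ ν : S → ℝ) : ℝ := ∑' s, |μ s - ν s|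

/-- `μ : S → ℝ` is a probability distribution. -/
def IsDistr {S : Type*} (μ : S → ℝ) : Prop :=
  (∀ s, 0 ≤ μ s) ∧ (∀ s, μ s ≤ 1) ∧ HasSum μ 1

/-- Image of a set under a relation. -/
def relImg {S : Type*} (R : S → S → Prop) (A : Set S) : Set S := {t | ∃ s ∈ A, R s t}

/-- ε-bisimulation on a labeled Markov chain with transition function `P` and labeling `lab`. -/
def IsEpsBisim {S L : Type*} (P : S → S → ℝ) (lab : S → L) (ε : ℝ)
    (R : S → S → Prop) : Prop :=
  Reflexive R ∧ Symmetric R ∧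
    ∀ s t, R s t → lab s = lab t ∧
      ∀ A : Set S, pmass (P s) A ≤ pmass (P t) (relImg R A) + ε

/-- ε-APB (approximate probabilistic bisimulation with precision ε). -/
def IsEpsAPB {S L : Type*} (P : S → S → ℝ) (lab : S → L) (ε : ℝ)
    (R : S → S → Prop) : Prop :=
  Reflexive R ∧ Symmetric R ∧
    ∀ s t, R s t → lab s = lab t ∧
      ∀ A : Set S, relImg R A ⊆ A → |pmass (P s) A - pmass (P t) A| ≤ ε

/-- Weight of a finite path witnessing `B U A` starting at `s` and continuing along the list. -/
noncomputable def untilWeight {S : Type*} (P : S → S → ℝ) (B A : Set S) :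
    S → List S → ℝ
  | s, [] => if s ∈ A then 1 else 0
  | s, t :: rest =>
      if s ∈ A then 0 else if s ∈ B then P s t * untilWeight P B A t rest else 0

/-- `Pr_s(B U A)`: probability of reaching `A` from `s` via states in `B`. -/
noncomputable def untilProb {S : Type*} (P : S → S → ℝ) (B A : Set S) (s : S) : ℝ :=
  ∑' l : List S, untilWeight P B A s l

/-- `Pr_s(□C)`: probability of staying in `C` forever, `= 1 - Pr_s(C U Cᶜ)`. -/
noncomputable def boxProb {S : Type*} (P : S → S → ℝ) (C : Set S) (s : S) : ℝ :=
  1 - untilProb P C Cᶜ s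

/-- Weak ε-bisimulation. -/
def IsWeakEpsBisim {S L : Type*} (P : S → S → ℝ) (lab : S → L) (ε : ℝ)
    (R : S → S → Prop) : Prop :=
  Reflexive R ∧ Symmetric R ∧
    ∀ s t, R s t → lab s = lab t ∧
      ∀ A : Set S, untilProb P {u | lab u = lab s} A s ≤
        untilProb P {u | lab u = lab t} (relImg R A) t + ε

/-- Weak ε-bisimilarity of two states. -/
def WeakEpsBisimilar {S L : Type*} (P : S → S → ℝ) (lab : S → L) (ε : ℝ)
    (s t : S) : Prop :=
  ∃ R, IsWeakEpsBisim P lab ε R ∧ R s t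

/-- Up-to-(n,ε)-bisimilarity. -/
def upTo {S L : Type*} (P : S → S → ℝ) (lab : S → L) (ε : ℝ) :
    ℕ → S → S → Prop
  | 0, _, _ => True
  | n + 1, s, t => lab s = lab t ∧
      ∀ A : Set S,
        pmass (P s) A ≤ pmass (P t) (relImg (upTo P lab ε n) A) + ε ∧
        pmass (P t) A ≤ pmass (P s) (relImg (upTo P lab ε n) A) + ε

/-- Branching ε-bisimulation. -/
def IsBranchingEpsBisim {S L : Type*} (P : S → S → ℝ) (lab : S → L) (ε : ℝ)
    (R : S → S → Prop) : Prop :=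
  Equivalence R ∧
    ∀ s t, R s t → lab s = lab t ∧
      ∀ A : Set S, relImg R A ⊆ A →
        |untilProb P {u | R s u} A s - untilProb P {u | R t u} A t| ≤ ε

/-- Transitive ε-bisimulation (equivalently, an ε-APB which is an equivalence). -/
def IsTransEpsBisim {S L : Type*} (P : S → S → ℝ) (lab : S → L) (ε : ℝ)
    (R : S → S → Prop) : Prop :=
  Equivalence R ∧
    ∀ s t, R s t → lab s = lab t ∧
      ∀ A : Set S, relImg R A ⊆ A → |pmass (P s) A - pmass (P t) A| ≤ ε

/-- Exact probabilistic bisimulation. -/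
def IsExactBisim {S L : Type*} (P : S → S → ℝ) (lab : S → L)
    (R : S → S → Prop) : Prop :=
  Equivalence R ∧
    ∀ s t, R s t → lab s = lab t ∧
      ∀ c, pmass (P s) {u | R c u} = pmass (P t) {u | R c u}

/-- `Pr_s(◇^{≤k} G)`: probability of reaching `G` from `s` within `k` steps. -/
noncomputable def reachLe {S : Type*} (P : S → S → ℝ) (G : Set S) :
    ℕ → S → ℝ
  | 0, s => if s ∈ G then 1 else 0
  | k + 1, s => if s ∈ G then 1 else ∑' t, P s t * reachLe P G k t

section Aux
variable {S : Type*}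

lemma pmass_eq_ind (μ : S → ℝ) (A : Set S) :
    pmass μ A = ∑' x, Set.indicator A μ x := tsum_subtype A μ

lemma pmass_mono {μ : S → ℝ} (h0 : ∀ s, 0 ≤ μ s) (hs : Summable μ)
    {A B : Set S} (hAB : A ⊆ B) : pmass μ A ≤ pmass μ B := by
  rw [pmass_eq_ind, pmass_eq_ind]
  refine Summable.tsum_le_tsum (fun x => ?_) (hs.indicator A) (hs.indicator B)
  exact Set.indicator_le_indicator_of_subset hAB h0 x

lemma pmass_univ {μ : S → ℝ} (h : HasSum μ 1) : pmass μ Set.univ = 1 := by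
  rw [pmass, tsum_univ]; exact h.tsum_eq

lemma pmass_le_one {μ : S → ℝ} (h0 : ∀ s, 0 ≤ μ s) (h : HasSum μ 1) (A : Set S) :
    pmass μ A ≤ 1 := by
  have := pmass_mono h0 h.summable (Set.subset_univ A)
  rwa [pmass_univ h] at this

lemma zero_on_of_pmass_zero {μ : S → ℝ} (h0 : ∀ s, 0 ≤ μ s) (hs : Summable μ)
    {B : Set S} (hB : pmass μ B = 0) {u : S} (hu : u ∈ B) : μ u = 0 := by
  have h1 : μ u ≤ pmass μ B :=
    Summable.le_tsum (hs.subtype B) (⟨u, hu⟩ : B) (fun b' _ => h0 b'.1)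
  have := h0 u
  linarith

lemma untilProb_mem {P : S → S → ℝ} {B A : Set S} {s : S} (hA : s ∈ A) :
    untilProb P B A s = 1 := by
  unfold untilProb
  rw [tsum_eq_single ([] : List S)]
  · simp [untilWeight, hA]
  · intro l hl
    cases l with
    | nil => exact absurd rfl hl
    | cons t r => simp [untilWeight, hA]

lemma untilProb_not_mem {P : S → S → ℝ} {B A : Set S} {s : S}
    (hA : s ∉ A) (hB : s ∈ B) (hz : ∀ u ∈ B, P s u = 0) :
    untilProb P B A s = pmass (P s) A := by
  have hfg : ∀ l : List S, untilWeight P B A s l =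
      (fun l : List S => match l with
        | [] => (0 : ℝ)
        | t :: r => if t ∈ A ∧ r = [] then P s t else 0) l := by
    intro l
    cases l with
    | nil => simp [untilWeight, hA]
    | cons t r =>
      simp only [untilWeight, if_neg hA, if_pos hB]
      by_cases htA : t ∈ A
      · cases r with
        | nil => simp [untilWeight, htA]
        | cons u r' => simp [untilWeight, htA]
      · simp only [htA, false_and, if_false]
        by_cases htB : t ∈ B
        · rw [hz t htB]; ring
        · cases r with
          | nil => simp [untilWeight, htA]
          | cons u r' => simp [untilWeight, htA, htB]
  rw [untilProb, tsum_congr hfg]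
  have hinj : Function.Injective (fun t : S => [t]) := by
    intro a b h; simpa using h
  have hsupp : Function.support (fun l : List S => match l with
        | [] => (0 : ℝ)
        | t :: r => if t ∈ A ∧ r = [] then P s t else 0) ⊆
      Set.range (fun t : S => [t]) := by
    intro l hl
    cases l with
    | nil => simp [Function.mem_support] at hl
    | cons t r =>
      cases r with
      | nil => exact ⟨t, rfl⟩
      | cons u r' => simp [Function.mem_support] at hl
  rw [← hinj.tsum_eq hsupp]
  simp only
  rw [pmass_eq_ind]
  refine tsum_congr fun t => ?_
  by_cases htA : t ∈ A <;> simp [htA, Set.indicator]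

end Aux

theorem noStutter_weak_eq_epsBisim {S L : Type*} [Countable S] [Nonempty S]
    (P : S → S → ℝ) (lab : S → L)
    (hP : ∀ s, IsDistr (P s)) (hfb : ∀ s, (Function.support (P s)).Finite)
    (ε : ℝ)
    (hns : ∀ s, pmass (P s) {u | lab u = lab s} = 0) :
    (∀ R : S → S → Prop, IsWeakEpsBisim P lab ε R ↔ IsEpsBisim P lab ε R) ∧
    (∀ s t : S, (∃ R, IsEpsBisim P lab ε R ∧ R s t) ↔ WeakEpsBisimilar P lab ε s t) := by
  have h0 : ∀ s u, 0 ≤ P s u := fun s => (hP s).1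
  have hsum : ∀ s, HasSum (P s) 1 := fun s => (hP s).2.2
  have hz : ∀ s u, lab u = lab s → P s u = 0 := fun s u hu =>
    zero_on_of_pmass_zero (h0 s) (hsum s).summable (hns s) hu
  -- the key rewriting: untilProb in terms of pmass
  have hup : ∀ (s : S) (A : Set S), s ∉ A →
      untilProb P {u | lab u = lab s} A s = pmass (P s) A := by
    intro s A hA
    exact untilProb_not_mem hA rfl (fun u hu => hz s u hu)
  have main : ∀ R : S → S → Prop, IsWeakEpsBisim P lab ε R ↔ IsEpsBisim P lab ε R := by
    intro R
    constructor
    · rintro ⟨hrefl, hsymm, h⟩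
      refine ⟨hrefl, hsymm, fun s t hst => ⟨(h s t hst).1, fun A => ?_⟩⟩
      have hlabst := (h s t hst).1
      set A' : Set S := A \ {u | lab u = lab s} with hA'
      have hsA' : s ∉ A' := fun hc => hc.2 rfl
      have htA' : t ∉ relImg R A' := by
        rintro ⟨u, hu, hRut⟩
        exact hu.2 (((h u t hRut).1).trans hlabst.symm)
      have hpe : pmass (P s) A = pmass (P s) A' := by
        rw [pmass_eq_ind, pmass_eq_ind]
        refine tsum_congr fun x => ?_
        by_cases hx : x ∈ A
        · by_cases hxl : lab x = lab s
          · simp [Set.indicator, hx, hA', hxl, hz s x hxl]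
          · simp [Set.indicator, hx, hA', hxl]
        · simp [Set.indicator, hx, hA', fun h : x ∈ A' => hx h.1]
      have h1 := (h s t hst).2 A'
      rw [hup s A' hsA', hup t (relImg R A') htA'] at h1
      have h2 : pmass (P t) (relImg R A') ≤ pmass (P t) (relImg R A) := by
        refine pmass_mono (h0 t) (hsum t).summable ?_
        rintro x ⟨u, hu, hRux⟩
        exact ⟨u, hu.1, hRux⟩
      linarith [hpe]
    · rintro ⟨hrefl, hsymm, h⟩
      have hε : 0 ≤ ε := by
        rcases ‹Nonempty S› with ⟨s⟩
        have := (h s s (hrefl s)).2 Set.univ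
        have hle : pmass (P s) (relImg R Set.univ) ≤ 1 :=
          pmass_le_one (h0 s) (hsum s) _
        rw [pmass_univ (hsum s)] at this
        linarith
      refine ⟨hrefl, hsymm, fun s t hst => ⟨(h s t hst).1, fun A => ?_⟩⟩
      have hlabst := (h s t hst).1
      by_cases hsA : s ∈ A
      · have ht : t ∈ relImg R A := ⟨s, hsA, hst⟩
        rw [untilProb_mem hsA, untilProb_mem ht]
        linarith
      · rw [hup s A hsA]
        by_cases htA : t ∈ relImg R A
        · rw [untilProb_mem htA]
          have := pmass_le_one (h0 s) (hsum s) A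
          linarith
        · rw [hup t (relImg R A) htA]
          exact (h s t hst).2 A
  exact ⟨main, fun s t => by
    constructor
    · rintro ⟨R, hR, hst⟩; exact ⟨R, (main R).mpr hR, hst⟩
    · rintro ⟨R, hR, hst⟩; exact ⟨R, (main R).mp hR, hst⟩⟩
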